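/- Let A, B be positive semi-definite operators on a finite-dimensional real inner product space V and c ∈ V. If (u₁, λ₁) and (u₂, λ₂) both satisfy the quasi-projection equations u − Aλ = Ac and (A+B)λ = (B−A)c, then u₁ = u₂, Aλ₁ = Aλ₂, and Bλ₁ = Bλ₂. -/

import Mathlib

open scoped RealInnerProductSpace

lemma psd_inner_zero {V : Type*} [NormedAddCommGroup V] [InnerProductSpace ℝ V]
    (A : V →ₗ[ℝ] V) (hA : A.IsSymmetric) (hApsd : ∀ x : V, 0 ≤ (inner ℝ x (A x) : ℝ))
    (x : V) (hx : (inner ℝ x (A x) : ℝ) = 0) : A x = 0 := by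
  set y := A x with hy
  set a : ℝ := inner ℝ y (A y) with ha
  set b : ℝ := ‖y‖ ^ 2 with hb
  have ha0 : 0 ≤ a := hApsd y
  have hb0 : 0 ≤ b := by positivity
  have key : ∀ t : ℝ, 0 ≤ 2 * t * b + t ^ 2 * a := by
    intro t
    have h := hApsd (x + t • y)
    have hxy : (inner ℝ x (A y) : ℝ) = b := by
      rw [← hA x y, ← hy, real_inner_self_eq_norm_sq]
    have hyx : (inner ℝ y (A x) : ℝ) = b := by
      rw [← hy, real_inner_self_eq_norm_sq]
    simp only [map_add, map_smul, inner_add_left, inner_add_right,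
      real_inner_smul_left, real_inner_smul_right, hx, hxy, hyx] at h
    nlinarith [h]
  have hb2 : b = 0 := by
    rcases eq_or_lt_of_le ha0 with ha' | ha'
    · have hk := key (-1)
      rw [← ha'] at hk
      nlinarith
    · have hk := key (-(b / a))
      have heq : 2 * (-(b / a)) * b + (-(b / a)) ^ 2 * a = -(b ^ 2) / a := by
        field_simp
        ring
      rw [heq] at hk
      have h3 : (0:ℝ) ≤ -(b ^ 2) := by
        have h4 := mul_nonneg hk ha'.le
        rwa [div_mul_cancel₀ _ ha'.ne'] at h4
      nlinarith
  have hy0 : ‖y‖ = 0 := by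
    have hbb := hb2
    rw [hb] at hbb
    nlinarith [norm_nonneg y]
  simpa using hy0

theorem quasiProjection_uniqueness {V : Type*} [NormedAddCommGroup V] [InnerProductSpace ℝ V]
    [FiniteDimensional ℝ V] (A B : V →ₗ[ℝ] V)
    (hA : A.IsSymmetric) (hB : B.IsSymmetric)
    (hApsd : ∀ x : V, 0 ≤ (inner ℝ x (A x) : ℝ)) (hBpsd : ∀ x : V, 0 ≤ (inner ℝ x (B x) : ℝ))
    (c u₁ u₂ l₁ l₂ : V)
    (hq1₁ : u₁ - A l₁ = A c) (hq2₁ : (A + B) l₁ = (B - A) c)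
    (hq1₂ : u₂ - A l₂ = A c) (hq2₂ : (A + B) l₂ = (B - A) c) :
    u₁ = u₂ ∧ A l₁ = A l₂ ∧ B l₁ = B l₂ := by
  set d := l₁ - l₂ with hd
  have h := hq2₁.trans hq2₂.symm
  simp only [LinearMap.add_apply] at h
  have hsum : A d + B d = 0 := by
    rw [hd, map_sub, map_sub, sub_add_sub_comm, h, sub_self]
  have hinner : (inner ℝ d (A d) : ℝ) + (inner ℝ d (B d) : ℝ) = 0 := by
    rw [← inner_add_right, hsum, inner_zero_right]
  have hAd0 : (inner ℝ d (A d) : ℝ) = 0 := le_antisymm (by linarith [hBpsd d]) (hApsd d)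
  have hBd0 : (inner ℝ d (B d) : ℝ) = 0 := by linarith
  have hAd : A d = 0 := psd_inner_zero A hA hApsd d hAd0
  have hBd : B d = 0 := psd_inner_zero B hB hBpsd d hBd0
  have hAl : A l₁ = A l₂ := by
    rw [hd, map_sub] at hAd; exact sub_eq_zero.mp hAd
  have hBl : B l₁ = B l₂ := by
    rw [hd, map_sub] at hBd; exact sub_eq_zero.mp hBd
  refine ⟨?_, hAl, hBl⟩
  have h1 : u₁ = A c + A l₁ := by rw [← hq1₁]; abel
  have h2 : u₂ = A c + A l₂ := by rw [← hq1₂]; abel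
  rw [h1, h2, hAl]
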